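/- arXiv:0904.0050 — 4 statements merged into one kernel-verified Lean document; each statement's English description precedes it below -/
import Mathlib

section
/- For 0 < z < 1, the difference g_{3/2}(1) − g_{3/2}(z) is at most (1/4)·√π·√(−ln z) · 4, i.e. ζ(3/2) − g_{3/2}(z) ≤ √π · √(−ln z), where g_{3/2}(z) = ∑_{n≥1} z^n n^{-3/2}. -/
open Real MeasureTheory Set

lemma my_aux_int {u : ℝ} (hu : 0 < u) :
    IntegrableOn (fun x : ℝ => x ^ (-(1:ℝ)/2) * Real.exp (-(u*x))) (Ioi 0) := by
  have h := integrableOn_rpow_mul_exp_neg_mul_rpow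
    (s := -(1:ℝ)/2) (p := 1) (by norm_num) zero_lt_one hu
  refine h.congr_fun (fun x hx => ?_) measurableSet_Ioi
  beta_reduce
  rw [Real.rpow_one, neg_mul]

lemma my_gamma_int {u : ℝ} (hu : 0 < u) :
    ∫ x in Ioi (0:ℝ), x ^ (-(1:ℝ)/2) * Real.exp (-(u*x))
      = Real.sqrt π * u ^ (-(1:ℝ)/2) := by
  have h := integral_rpow_mul_exp_neg_mul_Ioi (a := 1/2) (by norm_num) hu
  have h2 : ∀ x : ℝ, x ^ ((1:ℝ)/2 - 1) = x ^ (-(1:ℝ)/2) := by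
    intro x; norm_num
  simp_rw [h2] at h
  rw [h, Real.Gamma_one_half_eq, mul_comm]
  congr 1
  rw [one_div, ← Real.rpow_neg_one u, ← Real.rpow_mul hu.le]
  norm_num

/-- Pointwise bound: partial sums of `g_{1/2}` type series bounded by `√π u^{-1/2}`. -/
lemma my_sum_le {u : ℝ} (hu : 0 < u) (N : ℕ) :
    ∑ n ∈ Finset.range N, ((n:ℝ)+1) ^ (-(1:ℝ)/2) * Real.exp (-(u*((n:ℝ)+1)))
      ≤ Real.sqrt π * u ^ (-(1:ℝ)/2) := by
  set f : ℝ → ℝ := fun x => x ^ (-(1:ℝ)/2) * Real.exp (-(u*x)) with hf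
  have hanti : ∀ x y : ℝ, 0 < x → x ≤ y → f y ≤ f x := by
    intro x y hx hxy
    apply mul_le_mul
    · exact Real.rpow_le_rpow_of_nonpos hx hxy (by norm_num)
    · exact Real.exp_le_exp.2 (by nlinarith)
    · positivity
    · positivity
  have hint : ∀ n : ℕ, IntervalIntegrable f volume (n:ℝ) ((n:ℝ)+1) := by
    intro n
    rw [intervalIntegrable_iff_integrableOn_Ioc_of_le (by linarith)]
    exact (my_aux_int hu).mono_set fun x hx => lt_of_le_of_lt (Nat.cast_nonneg n) hx.1
  have hterm : ∀ n : ℕ, f ((n:ℝ)+1) ≤ ∫ x in (n:ℝ)..((n:ℝ)+1), f x := by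
    intro n
    rw [intervalIntegral.integral_of_le (by linarith)]
    have : f ((n:ℝ)+1) = ∫ _ in Ioc (n:ℝ) ((n:ℝ)+1), f ((n:ℝ)+1) := by
      rw [setIntegral_const, Real.volume_real_Ioc]
      norm_num
    rw [this]
    apply setIntegral_mono_on
    · exact integrableOn_const (by rw [Real.volume_Ioc]; exact ENNReal.ofReal_ne_top)
    · exact (intervalIntegrable_iff_integrableOn_Ioc_of_le (by linarith)).1 (hint n)
    · exact measurableSet_Ioc
    · intro x hx
      exact hanti x ((n:ℝ)+1) (lt_of_le_of_lt (Nat.cast_nonneg n) hx.1) hx.2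
  calc ∑ n ∈ Finset.range N, ((n:ℝ)+1) ^ (-(1:ℝ)/2) * Real.exp (-(u*((n:ℝ)+1)))
      = ∑ n ∈ Finset.range N, f ((n:ℝ)+1) := rfl
    _ ≤ ∑ n ∈ Finset.range N, ∫ x in (n:ℝ)..((n:ℝ)+1), f x :=
        Finset.sum_le_sum fun n _ => hterm n
    _ = ∫ x in (0:ℝ)..(N:ℝ), f x := by
        have := intervalIntegral.sum_integral_adjacent_intervals
          (a := fun i : ℕ => (i:ℝ)) (n := N) (f := f) (μ := volume) ?_
        · simp only [Nat.cast_zero] at this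
          rw [← this]
          apply Finset.sum_congr rfl
          intro n _
          push_cast
          rfl
        · intro k _
          have := hint k
          push_cast
          convert this using 2
    _ = ∫ x in Ioc (0:ℝ) (N:ℝ), f x := intervalIntegral.integral_of_le (Nat.cast_nonneg N)
    _ ≤ ∫ x in Ioi (0:ℝ), f x := by
        apply setIntegral_mono_set (my_aux_int hu)
        · filter_upwards [self_mem_ae_restrict measurableSet_Ioi] with x hx
          have : (0:ℝ) < x := hx
          positivity
        · exact Filter.Eventually.of_forall fun x hx => hx.1
    _ = Real.sqrt π * u ^ (-(1:ℝ)/2) := my_gamma_int hu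

lemma my_exp_int {m : ℝ} (hm : 0 < m) (t : ℝ) :
    ∫ u in (0:ℝ)..t, Real.exp (-(m*u)) = (1 - Real.exp (-(m*t)))/m := by
  have h := intervalIntegral.integral_comp_mul_left (c := -m) (a := 0) (b := t)
    (f := fun x => Real.exp x) (by linarith)
  simp only [neg_mul, mul_zero, integral_exp] at h ⊢
  rw [h, smul_eq_mul]
  have hm' : m ≠ 0 := hm.ne'
  rw [Real.exp_zero, inv_neg, eq_div_iff hm']
  field_simp
  ring

/-- For `0 < z < 1`, `ζ(3/2) - g_{3/2}(z) ≤ 2 √π √(-ln z)`, where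
`g_{3/2}(z) = ∑ₙ zⁿ n^{-3/2}`. -/
theorem stmt_1 (z : ℝ) (hz0 : 0 < z) (hz1 : z < 1) :
    (∑' n : ℕ, ((n : ℝ) + 1) ^ (-(3 : ℝ) / 2)) -
      (∑' n : ℕ, z ^ (n + 1) * ((n : ℝ) + 1) ^ (-(3 : ℝ) / 2)) ≤
        2 * Real.sqrt π * Real.sqrt (-Real.log z) := by
  have ht : 0 < -Real.log z := neg_pos.2 (Real.log_neg hz0 hz1)
  set t : ℝ := -Real.log z with htdef
  have hzexp : z = Real.exp (-t) := by rw [htdef, neg_neg, Real.exp_log hz0]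
  have hs1 : Summable (fun n : ℕ => ((n:ℝ)+1) ^ (-(3:ℝ)/2)) := by
    have h0 : Summable (fun n : ℕ => (n:ℝ) ^ (-(3:ℝ)/2)) :=
      Real.summable_nat_rpow.2 (by norm_num)
    exact ((summable_nat_add_iff 1).2 h0).congr (fun n => by push_cast; ring_nf)
  have hle1 : ∀ n : ℕ, z ^ (n+1) * ((n:ℝ)+1) ^ (-(3:ℝ)/2) ≤ ((n:ℝ)+1) ^ (-(3:ℝ)/2) := by
    intro n
    apply mul_le_of_le_one_left (by positivity)
    exact pow_le_one₀ hz0.le hz1.le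
  have hs2 : Summable (fun n : ℕ => z ^ (n+1) * ((n:ℝ)+1) ^ (-(3:ℝ)/2)) :=
    Summable.of_nonneg_of_le (fun n => by positivity) hle1 hs1
  have hmain : ∀ N : ℕ, ∑ n ∈ Finset.range N,
      (((n:ℝ)+1) ^ (-(3:ℝ)/2) - z ^ (n+1) * ((n:ℝ)+1) ^ (-(3:ℝ)/2))
        ≤ 2 * Real.sqrt π * Real.sqrt t := by
    intro N
    have hterm : ∀ n : ℕ,
        ((n:ℝ)+1) ^ (-(3:ℝ)/2) - z ^ (n+1) * ((n:ℝ)+1) ^ (-(3:ℝ)/2)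
          = ∫ u in (0:ℝ)..t, ((n:ℝ)+1) ^ (-(1:ℝ)/2) * Real.exp (-(((n:ℝ)+1)*u)) := by
      intro n
      have hm : (0:ℝ) < (n:ℝ)+1 := by positivity
      have hz : z ^ (n+1) = Real.exp (-(((n:ℝ)+1)*t)) := by
        rw [hzexp, ← Real.exp_nat_mul]
        push_cast
        ring_nf
      rw [intervalIntegral.integral_const_mul, my_exp_int hm t, ← hz]
      have h32 : ((n:ℝ)+1) ^ (-(3:ℝ)/2) = ((n:ℝ)+1) ^ (-(1:ℝ)/2) * ((n:ℝ)+1)⁻¹ := by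
        rw [← Real.rpow_neg_one ((n:ℝ)+1), ← Real.rpow_add hm]
        norm_num
      rw [h32]
      field_simp
    simp_rw [hterm]
    have hintg : ∀ n ∈ Finset.range N, IntervalIntegrable
        (fun u => ((n:ℝ)+1) ^ (-(1:ℝ)/2) * Real.exp (-(((n:ℝ)+1)*u))) volume (0:ℝ) t := by
      intro n _
      exact (Continuous.mul continuous_const (by fun_prop)).intervalIntegrable 0 t
    rw [← intervalIntegral.integral_finset_sum hintg]
    have hrhs : (2:ℝ) * Real.sqrt π * Real.sqrt t
        = ∫ u in (0:ℝ)..t, Real.sqrt π * u ^ (-(1:ℝ)/2) := by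
      rw [intervalIntegral.integral_const_mul, integral_rpow (Or.inl (by norm_num)),
        Real.sqrt_eq_rpow π, Real.sqrt_eq_rpow t]
      norm_num [Real.zero_rpow]
      ring
    rw [hrhs, intervalIntegral.integral_of_le ht.le, intervalIntegral.integral_of_le ht.le]
    apply setIntegral_mono_on
    · apply (intervalIntegrable_iff_integrableOn_Ioc_of_le ht.le).1
      apply Continuous.intervalIntegrable
      exact continuous_finset_sum _ (fun n _ => by fun_prop)
    · apply (intervalIntegrable_iff_integrableOn_Ioc_of_le ht.le).1
      exact ((intervalIntegral.intervalIntegrable_rpow' (by norm_num)).const_mul _)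
    · exact measurableSet_Ioc
    · intro u hu
      have h := my_sum_le hu.1 N
      simp_rw [mul_comm u] at h
      exact h
  rw [← Summable.tsum_sub hs1 hs2]
  apply Summable.tsum_le_of_sum_le (hs1.sub hs2)
  intro s
  obtain ⟨N, hN⟩ := s.exists_nat_subset_range
  calc ∑ n ∈ s, (((n:ℝ)+1) ^ (-(3:ℝ)/2) - z ^ (n+1) * ((n:ℝ)+1) ^ (-(3:ℝ)/2))
      ≤ ∑ n ∈ Finset.range N, (((n:ℝ)+1) ^ (-(3:ℝ)/2) - z ^ (n+1) * ((n:ℝ)+1) ^ (-(3:ℝ)/2)) := by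
        apply Finset.sum_le_sum_of_subset_of_nonneg hN
        intro n _ _
        exact sub_nonneg.2 (hle1 n)
    _ ≤ 2 * Real.sqrt π * Real.sqrt t := hmain N
end

section
/- The function f(t) = t(1 − e^{−t})/(t − 1 + e^{−t}) defined for t > 0 satisfies 1 ≤ f(t) ≤ 2 for all t > 0. -/
open Real Set

private lemma aux_mono (g : ℝ → ℝ) (hg : Differentiable ℝ g) (h0 : g 0 = 0)
    (hd : ∀ x, 0 ≤ x → 0 ≤ deriv g x) {t : ℝ} (ht : 0 ≤ t) : 0 ≤ g t := by
  have hmono : MonotoneOn g (Ici (0:ℝ)) := by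
    apply monotoneOn_of_deriv_nonneg (convex_Ici 0) hg.continuous.continuousOn
      (fun x _ => (hg x).differentiableWithinAt)
    intro x hx
    rw [interior_Ici] at hx
    exact hd x hx.le
  have := hmono (self_mem_Ici) ht ht
  simpa [h0] using this

private lemma L1 (x : ℝ) : 1 - x ≤ Real.exp (-x) := by
  have := Real.add_one_le_exp (-x); linarith

private lemma L2 (x : ℝ) (hx : 0 ≤ x) : Real.exp (-x) ≤ 1 - x + x^2/2 := by
  have h := aux_mono (fun x => 1 - x + x^2/2 - Real.exp (-x))
    (by fun_prop) (by norm_num)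
    (fun y hy => by
      have h1 : deriv (fun x : ℝ => 1 - x + x^2/2 - Real.exp (-x)) y
          = -1 + y + Real.exp (-y) := by
        have : HasDerivAt (fun x : ℝ => 1 - x + x^2/2 - Real.exp (-x))
            (-1 + y + Real.exp (-y)) y := by
          have he : HasDerivAt (fun x : ℝ => Real.exp (-x)) (-Real.exp (-y)) y := by
            exact ((Real.hasDerivAt_exp (-y)).comp y (hasDerivAt_neg y)).congr_deriv (by ring)
          have hp : HasDerivAt (fun x : ℝ => 1 - x + x^2/2) (-1 + y) y := by
            have := ((hasDerivAt_pow 2 y).div_const 2)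
            have h2 : HasDerivAt (fun x : ℝ => 1 - x) (-1) y := by
              exact ((hasDerivAt_const y (1:ℝ)).sub (hasDerivAt_id y)).congr_deriv (by ring)
            exact (h2.add this).congr_deriv (by norm_num)
          exact (hp.sub he).congr_deriv (by ring)
        exact this.deriv
      rw [h1]
      have := L1 y
      linarith) hx
  simpa using h

private lemma L3 (x : ℝ) (hx : 0 ≤ x) : 1 - x + x^2/2 - x^3/6 ≤ Real.exp (-x) := by
  have h := aux_mono (fun x => Real.exp (-x) - (1 - x + x^2/2 - x^3/6))
    (by fun_prop) (by norm_num)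
    (fun y hy => by
      have h1 : deriv (fun x : ℝ => Real.exp (-x) - (1 - x + x^2/2 - x^3/6)) y
          = -Real.exp (-y) - (-1 + y - y^2/2) := by
        have he : HasDerivAt (fun x : ℝ => Real.exp (-x)) (-Real.exp (-y)) y := by
          exact ((Real.hasDerivAt_exp (-y)).comp y (hasDerivAt_neg y)).congr_deriv (by ring)
        have hp : HasDerivAt (fun x : ℝ => 1 - x + x^2/2 - x^3/6) (-1 + y - y^2/2) y := by
          have h2 := (hasDerivAt_pow 2 y).div_const 2
          have h3 := (hasDerivAt_pow 3 y).div_const 6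
          have hc : HasDerivAt (fun x : ℝ => 1 - x) (-1) y := by
            exact ((hasDerivAt_const y (1:ℝ)).sub (hasDerivAt_id y)).congr_deriv (by ring)
          have := (hc.add h2).sub h3
          exact this.congr_deriv (by norm_num <;> ring)
        exact (he.sub hp).deriv
      rw [h1]
      have := L2 y hy
      nlinarith) hx
  linarith [h]

private lemma L4 (x : ℝ) (hx : 0 ≤ x) :
    Real.exp (-x) ≤ 1 - x + x^2/2 - x^3/6 + x^4/24 := by
  have h := aux_mono (fun x => 1 - x + x^2/2 - x^3/6 + x^4/24 - Real.exp (-x))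
    (by fun_prop) (by norm_num)
    (fun y hy => by
      have h1 : deriv (fun x : ℝ => 1 - x + x^2/2 - x^3/6 + x^4/24 - Real.exp (-x)) y
          = (-1 + y - y^2/2 + y^3/6) + Real.exp (-y) := by
        have he : HasDerivAt (fun x : ℝ => Real.exp (-x)) (-Real.exp (-y)) y := by
          exact ((Real.hasDerivAt_exp (-y)).comp y (hasDerivAt_neg y)).congr_deriv (by ring)
        have h2 := (hasDerivAt_pow 2 y).div_const 2
        have h3 := (hasDerivAt_pow 3 y).div_const 6
        have h4 := (hasDerivAt_pow 4 y).div_const 24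
        have hc : HasDerivAt (fun x : ℝ => 1 - x) (-1) y := by
          exact ((hasDerivAt_const y (1:ℝ)).sub (hasDerivAt_id y)).congr_deriv (by ring)
        have := (((hc.add h2).sub h3).add h4).sub he
        have h5 : HasDerivAt (fun x : ℝ => 1 - x + x^2/2 - x^3/6 + x^4/24 - Real.exp (-x))
            ((-1 + y - y^2/2 + y^3/6) + Real.exp (-y)) y := by
          exact this.congr_deriv (by norm_num <;> ring)
        exact h5.deriv
      rw [h1]
      have := L3 y hy
      nlinarith) hx
  linarith [h]

private lemma L5 (x : ℝ) (hx : 0 ≤ x) :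
    1 - x + x^2/2 - x^3/6 + x^4/24 - x^5/120 ≤ Real.exp (-x) := by
  have h := aux_mono (fun x => Real.exp (-x) - (1 - x + x^2/2 - x^3/6 + x^4/24 - x^5/120))
    (by fun_prop) (by norm_num)
    (fun y hy => by
      have h1 : deriv (fun x : ℝ => Real.exp (-x) - (1 - x + x^2/2 - x^3/6 + x^4/24 - x^5/120)) y
          = -Real.exp (-y) - (-1 + y - y^2/2 + y^3/6 - y^4/24) := by
        have he : HasDerivAt (fun x : ℝ => Real.exp (-x)) (-Real.exp (-y)) y := by
          exact ((Real.hasDerivAt_exp (-y)).comp y (hasDerivAt_neg y)).congr_deriv (by ring)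
        have h2 := (hasDerivAt_pow 2 y).div_const 2
        have h3 := (hasDerivAt_pow 3 y).div_const 6
        have h4 := (hasDerivAt_pow 4 y).div_const 24
        have h5 := (hasDerivAt_pow 5 y).div_const 120
        have hc : HasDerivAt (fun x : ℝ => 1 - x) (-1) y := by
          exact ((hasDerivAt_const y (1:ℝ)).sub (hasDerivAt_id y)).congr_deriv (by ring)
        have hp : HasDerivAt (fun x : ℝ => 1 - x + x^2/2 - x^3/6 + x^4/24 - x^5/120)
            (-1 + y - y^2/2 + y^3/6 - y^4/24) y := by
          have := (((hc.add h2).sub h3).add h4).sub h5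
          exact this.congr_deriv (by norm_num <;> ring)
        exact (he.sub hp).deriv
      rw [h1]
      have := L4 y hy
      nlinarith) hx
  linarith [h]

/-- For `t > 0`, the function `f(t) = t(1-e^{-t})/(t-1+e^{-t})` satisfies
`1 ≤ f(t) ≤ 2`. -/
theorem stmt_5 (t : ℝ) (ht : 0 < t) :
    1 ≤ t * (1 - Real.exp (-t)) / (t - 1 + Real.exp (-t)) ∧
      t * (1 - Real.exp (-t)) / (t - 1 + Real.exp (-t)) ≤ 2 := by
  have hne : -t ≠ 0 := neg_ne_zero.mpr ht.ne'
  have hlt : 1 - t < Real.exp (-t) := by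
    have := Real.add_one_lt_exp hne; linarith
  have hD : 0 < t - 1 + Real.exp (-t) := by linarith
  have hep : 0 < Real.exp (-t) := Real.exp_pos _
  have hprod : Real.exp t * Real.exp (-t) = 1 := by
    rw [← Real.exp_add]; simp
  have h1t : 1 + t ≤ Real.exp t := by have := Real.add_one_le_exp t; linarith
  constructor
  · rw [le_div_iff₀ hD]
    -- need t*(1-e) ≥ t-1+e, i.e. (1+t)e ≤ 1
    have key : (1 + t) * Real.exp (-t) ≤ 1 := by
      calc (1 + t) * Real.exp (-t) ≤ Real.exp t * Real.exp (-t) := by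
            apply mul_le_mul_of_nonneg_right h1t hep.le
        _ = 1 := hprod
    nlinarith
  · rw [div_le_iff₀ hD]
    rcases le_or_gt 2 t with h2 | h2
    · nlinarith
    · have := L5 t ht.le
      nlinarith [sq_nonneg t, pow_pos ht 3, pow_pos ht 2,
        mul_pos (pow_pos ht 2) (sub_pos.mpr h2)]
end

section
/- The function f(t) = t(1 − e^{−t})/(t − 1 + e^{−t}) is monotone decreasing on (0, ∞), with limit 2 as t → 0⁺ and limit 1 as t → ∞. -/
open Filter

private lemma hexp' (t : ℝ) : HasDerivAt (fun s : ℝ => Real.exp (-s)) (-Real.exp (-t)) t := by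
  simpa [Function.comp_def] using (Real.hasDerivAt_exp (-t)).comp t ((hasDerivAt_id t).neg)

private lemma hN' (t : ℝ) : HasDerivAt (fun s : ℝ => s * (1 - Real.exp (-s)))
    (1 - Real.exp (-t) + t * Real.exp (-t)) t := by
  have h := (hasDerivAt_id t).mul ((hasDerivAt_const t (1:ℝ)).sub (hexp' t))
  refine h.congr_deriv ?_
  simp only [Pi.sub_apply, id_eq]; ring

private lemma hD' (t : ℝ) : HasDerivAt (fun s : ℝ => s - 1 + Real.exp (-s))
    (1 - Real.exp (-t)) t := by
  have h := ((hasDerivAt_id t).sub (hasDerivAt_const t (1:ℝ))).add (hexp' t)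
  refine h.congr_deriv ?_
  ring

private lemma Dpos' {t : ℝ} (ht : 0 < t) : 0 < t - 1 + Real.exp (-t) := by
  have := Real.add_one_lt_exp (x := -t) (by linarith)
  linarith

private lemma key' {t : ℝ} (ht : 0 < t) :
    t ^ 2 * Real.exp (-t) ≤ (1 - Real.exp (-t)) ^ 2 := by
  set a := Real.exp (-(t / 2)) with ha
  have hapos : 0 < a := Real.exp_pos _
  have hsq : Real.exp (-t) = a ^ 2 := by
    rw [ha, sq, ← Real.exp_add]; ring_nf
  have hsinh : t / 2 ≤ Real.sinh (t / 2) := Real.self_le_sinh_iff.mpr (by linarith)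
  rw [Real.sinh_eq] at hsinh
  have h1 : t ≤ Real.exp (t / 2) - Real.exp (-(t / 2)) := by linarith
  have hinv : Real.exp (t / 2) = 1 / a := by
    rw [ha, eq_div_iff (Real.exp_pos _).ne', ← Real.exp_add]
    norm_num
  have h2 : t * a ≤ 1 - a ^ 2 := by
    have h := mul_le_mul_of_nonneg_right h1 hapos.le
    rw [hinv, ← ha] at h
    calc t * a ≤ (1 / a - a) * a := h
      _ = 1 - a ^ 2 := by field_simp
  have hta : 0 ≤ t * a := by positivity
  nlinarith [sq_nonneg (1 - a ^ 2 - t * a)]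

/-- `f(t) = t(1-e^{-t})/(t-1+e^{-t})` is monotone decreasing on `(0, ∞)`, with
limit `2` as `t → 0⁺` and limit `1` as `t → ∞`. -/
theorem stmt_6 :
    AntitoneOn (fun t : ℝ => t * (1 - Real.exp (-t)) / (t - 1 + Real.exp (-t)))
        (Set.Ioi (0 : ℝ)) ∧
      Tendsto (fun t : ℝ => t * (1 - Real.exp (-t)) / (t - 1 + Real.exp (-t)))
        (nhdsWithin 0 (Set.Ioi 0)) (nhds 2) ∧
      Tendsto (fun t : ℝ => t * (1 - Real.exp (-t)) / (t - 1 + Real.exp (-t)))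
        atTop (nhds 1) := by
  have hderF : ∀ x : ℝ, 0 < x →
      HasDerivAt (fun t : ℝ => t * (1 - Real.exp (-t)) / (t - 1 + Real.exp (-t)))
        (((1 - Real.exp (-x) + x * Real.exp (-x)) * (x - 1 + Real.exp (-x)) -
          x * (1 - Real.exp (-x)) * (1 - Real.exp (-x))) / (x - 1 + Real.exp (-x)) ^ 2) x :=
    fun x hx => (hN' x).div (hD' x) (Dpos' hx).ne'
  refine ⟨?_, ?_, ?_⟩
  · -- Antitone
    apply antitoneOn_of_deriv_nonpos (convex_Ioi 0)
    · apply ContinuousOn.div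
      · fun_prop
      · fun_prop
      · intro x hx; exact (Dpos' hx).ne'
    · rw [interior_Ioi]
      intro x hx
      exact ((hderF x hx).differentiableAt.differentiableWithinAt)
    · rw [interior_Ioi]
      intro x hx
      rw [(hderF x hx).deriv]
      apply div_nonpos_of_nonpos_of_nonneg
      · nlinarith [key' hx]
      · positivity
  · -- limit at 0⁺ via L'Hôpital twice
    have hg'ne : ∀ x ∈ Set.Ioo (0:ℝ) 1, (1 : ℝ) - Real.exp (-x) ≠ 0 := by
      intro x hx
      have : Real.exp (-x) < 1 := Real.exp_lt_one_iff.mpr (by linarith [hx.1])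
      linarith
    have hstep2 : Tendsto (fun t : ℝ => (1 - Real.exp (-t) + t * Real.exp (-t)) /
        (1 - Real.exp (-t))) (nhdsWithin 0 (Set.Ioi 0)) (nhds 2) := by
      apply HasDerivAt.lhopital_zero_right_on_Ioo (a := 0) (b := 1) one_pos
        (f' := fun t => 2 * Real.exp (-t) - t * Real.exp (-t))
        (g' := fun t => Real.exp (-t))
      · intro x _
        have h := ((hasDerivAt_const x (1:ℝ)).sub (hexp' x)).add
          ((hasDerivAt_id x).mul (hexp' x))
        refine h.congr_deriv ?_
        simp only [id_eq]; ring
      · intro x _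
        have h := ((hasDerivAt_const x (1:ℝ)).sub (hexp' x))
        refine h.congr_deriv ?_
        ring
      · intro x _; exact (Real.exp_pos _).ne'
      · have hc : ContinuousWithinAt (fun t : ℝ => 1 - Real.exp (-t) + t * Real.exp (-t))
            (Set.Ioi 0) 0 := Continuous.continuousWithinAt (by fun_prop)
        simpa using hc.tendsto
      · have hc : ContinuousWithinAt (fun t : ℝ => 1 - Real.exp (-t))
            (Set.Ioi 0) 0 := Continuous.continuousWithinAt (by fun_prop)
        simpa using hc.tendsto
      · have heq : ∀ t : ℝ, (2 * Real.exp (-t) - t * Real.exp (-t)) / Real.exp (-t)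
            = 2 - t := by
          intro t
          field_simp
        simp_rw [heq]
        have hc : ContinuousWithinAt (fun t : ℝ => 2 - t) (Set.Ioi 0) 0 :=
          Continuous.continuousWithinAt (by fun_prop)
        simpa using hc.tendsto
    apply HasDerivAt.lhopital_zero_right_on_Ioo (a := 0) (b := 1) one_pos
      (f' := fun t => 1 - Real.exp (-t) + t * Real.exp (-t))
      (g' := fun t => 1 - Real.exp (-t))
    · intro x _; exact hN' x
    · intro x _; exact hD' x
    · intro x hx; exact hg'ne x hx
    · have hc : ContinuousWithinAt (fun t : ℝ => t * (1 - Real.exp (-t)))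
          (Set.Ioi 0) 0 := Continuous.continuousWithinAt (by fun_prop)
      simpa using hc.tendsto
    · have hc : ContinuousWithinAt (fun t : ℝ => t - 1 + Real.exp (-t))
          (Set.Ioi 0) 0 := Continuous.continuousWithinAt (by fun_prop)
      simpa using hc.tendsto
    · exact hstep2
  · -- limit at ∞
    have h1 : Tendsto (fun t : ℝ => Real.exp (-t)) atTop (nhds 0) := by
      simpa using Real.tendsto_exp_neg_atTop_nhds_zero
    have h2 : Tendsto (fun t : ℝ => (t : ℝ)⁻¹) atTop (nhds 0) := tendsto_inv_atTop_zero
    have h3 : Tendsto (fun t : ℝ => Real.exp (-t) * t⁻¹) atTop (nhds 0) := by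
      simpa using h1.mul h2
    have hnum : Tendsto (fun t : ℝ => 1 - Real.exp (-t)) atTop (nhds 1) := by
      simpa using (tendsto_const_nhds (x := (1:ℝ))).sub h1
    have hden : Tendsto (fun t : ℝ => 1 - t⁻¹ + Real.exp (-t) * t⁻¹) atTop (nhds 1) := by
      have := ((tendsto_const_nhds (x := (1:ℝ))).sub h2).add h3
      simpa using this
    have hg : Tendsto (fun t : ℝ => (1 - Real.exp (-t)) / (1 - t⁻¹ + Real.exp (-t) * t⁻¹))
        atTop (nhds 1) := by
      simpa [Pi.div_def] using hnum.div hden one_ne_zero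
    refine hg.congr' ?_
    filter_upwards [eventually_gt_atTop (0:ℝ)] with t ht
    have htne : t ≠ 0 := ht.ne'
    have hrw : 1 - t⁻¹ + Real.exp (-t) * t⁻¹ = (t - 1 + Real.exp (-t)) / t := by
      field_simp
    rw [hrw, div_div_eq_mul_div, mul_comm]
end

section
/- Let U ≥ 0 be measurable on ℝ^d and let K_β(x,y) denote the (nonnegative) integral kernel of e^{2βΔ} − e^{β(2Δ−U)}. Define a(β) = (8πβ)^{-1} ∫∫ K_β(x,y) dx dy, a'(β) = (8πβ)^{d/2−1} ∫ K_β(x,x) dx, and a''(β) = (8πβ)^{d/2−1} ∫ K_β(x,−x) dx. Then max{a'(β), a''(β)} ≤ 2^{d/2} · a(β/2). -/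
open Real MeasureTheory

lemma gauss_integrable (d : ℕ) {b : ℝ} (hb : 0 < b) :
    Integrable (fun v : EuclideanSpace ℝ (Fin d) => Real.exp (-b * ‖v‖ ^ 2)) := by
  have hmp := (EuclideanSpace.volume_preserving_symm_measurableEquiv_toLp (Fin d)).symm
  rw [← hmp.integrable_comp_emb (MeasurableEquiv.measurableEmbedding _)]
  have h : Integrable (fun y : Fin d → ℝ => ∏ i, Real.exp (-b * (y i) ^ 2)) :=
    Integrable.fintype_prod (f := fun (_ : Fin d) (x : ℝ) => Real.exp (-b * x ^ 2))
      (fun _ => integrable_exp_neg_mul_sq hb)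
  refine h.congr (Filter.Eventually.of_forall fun y => ?_)
  simp only [Function.comp_apply]
  rw [← Real.exp_sum]
  congr 1
  have : ‖(MeasurableEquiv.toLp 2 (Fin d → ℝ)).symm.symm y‖ ^ 2 = ∑ i, (y i) ^ 2 := by
    rw [EuclideanSpace.norm_eq, Real.sq_sqrt (Finset.sum_nonneg fun i _ => sq_nonneg _)]
    simp
  rw [this, Finset.mul_sum]

lemma gauss_integral (d : ℕ) {b : ℝ} (hb : 0 < b) (m : EuclideanSpace ℝ (Fin d)) :
    ∫ y : EuclideanSpace ℝ (Fin d), Real.exp (-b * ‖y - m‖ ^ 2) = (π / b) ^ ((d : ℝ) / 2) := by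
  rw [integral_sub_right_eq_self (fun y : EuclideanSpace ℝ (Fin d) => Real.exp (-b * ‖y‖ ^ 2)) m]
  rw [GaussianFourier.integral_rexp_neg_mul_sq_norm hb, finrank_euclideanSpace_fin]

lemma heat_factor (d : ℕ) {t : ℝ} (ht : 0 < t) (x z y : EuclideanSpace ℝ (Fin d)) :
    ((8*π*t) ^ (-(d:ℝ)/2) * Real.exp (-‖x-y‖^2/(8*t))) *
    ((8*π*t) ^ (-(d:ℝ)/2) * Real.exp (-‖y-z‖^2/(8*t)))
    = ((8*π*t) ^ (-(d:ℝ)/2) * (8*π*t) ^ (-(d:ℝ)/2) * Real.exp (-‖x-z‖^2/(8*(2*t)))) *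
      Real.exp (-(1/(4*t)) * ‖y - (2:ℝ)⁻¹ • (x+z)‖^2) := by
  set m : EuclideanSpace ℝ (Fin d) := (2:ℝ)⁻¹ • (x+z) with hm
  have hpar := parallelogram_law_with_norm ℝ (x - y) (y - z)
  have h1 : x - y + (y - z) = x - z := by abel
  have h2 : x - y - (y - z) = (2:ℝ) • (m - y) := by
    rw [hm]; module
  have h3 : ‖(2:ℝ) • (m - y)‖^2 = 4 * ‖y - m‖^2 := by
    rw [norm_smul, norm_sub_rev]
    simp only [Real.norm_ofNat]
    ring
  rw [h1, h2] at hpar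
  have ht8 : (8:ℝ)*t ≠ 0 := by positivity
  have key : -‖x-y‖^2/(8*t) + -‖y-z‖^2/(8*t)
      = -‖x-z‖^2/(8*(2*t)) + -(1/(4*t)) * ‖y - m‖^2 := by
    field_simp
    linear_combination 4 * hpar - 4 * h3
  calc ((8*π*t) ^ (-(d:ℝ)/2) * Real.exp (-‖x-y‖^2/(8*t))) *
      ((8*π*t) ^ (-(d:ℝ)/2) * Real.exp (-‖y-z‖^2/(8*t)))
      = (8*π*t) ^ (-(d:ℝ)/2) * (8*π*t) ^ (-(d:ℝ)/2) *
        Real.exp (-‖x-y‖^2/(8*t) + -‖y-z‖^2/(8*t)) := by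
        rw [Real.exp_add]; ring
    _ = _ := by rw [key, Real.exp_add]; ring

lemma heat_conv (d : ℕ) {t : ℝ} (ht : 0 < t) (x z : EuclideanSpace ℝ (Fin d)) :
    (∫ y : EuclideanSpace ℝ (Fin d),
      ((8*π*t) ^ (-(d:ℝ)/2) * Real.exp (-‖x-y‖^2/(8*t))) *
      ((8*π*t) ^ (-(d:ℝ)/2) * Real.exp (-‖y-z‖^2/(8*t))))
    = (8*π*(2*t)) ^ (-(d:ℝ)/2) * Real.exp (-‖x-z‖^2/(8*(2*t))) := by
  have hb : (0:ℝ) < 1/(4*t) := by positivity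
  simp only [heat_factor d ht x z]
  rw [integral_const_mul, gauss_integral d hb]
  have hπ : π / (1/(4*t)) = 4*π*t := by
    field_simp
  rw [hπ]
  have h8 : (0:ℝ) < 8*π*t := by positivity
  have h4 : (0:ℝ) < 4*π*t := by positivity
  have h16 : (0:ℝ) < 8*π*(2*t) := by positivity
  have hconst : (8*π*t) ^ (-(d:ℝ)/2) * (8*π*t) ^ (-(d:ℝ)/2) * (4*π*t) ^ ((d:ℝ)/2)
      = (8*π*(2*t)) ^ (-(d:ℝ)/2) := by
    rw [Real.rpow_def_of_pos h8, Real.rpow_def_of_pos h4, Real.rpow_def_of_pos h16,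
      ← Real.exp_add, ← Real.exp_add]
    congr 1
    have hl : Real.log (4*π*t) + Real.log (8*π*(2*t)) = 2 * Real.log (8*π*t) := by
      rw [← Real.log_mul (ne_of_gt h4) (ne_of_gt h16), show (4*π*t) * (8*π*(2*t)) = (8*π*t)^2 by ring,
        Real.log_pow]
      push_cast
      ring
    linear_combination ((d:ℝ)/2) * hl
  rw [mul_right_comm, hconst]

/-- Let `U ≥ 0` and let `K_β(x,y) ≥ 0` be the integral kernel of
`e^{2βΔ} - e^{β(2Δ-U)}`, i.e. `K_β = p_β - q_β` where `p_β` is the free heat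
kernel `p_β(x,y) = (8πβ)^{-d/2} e^{-|x-y|²/(8β)}` and `q_β` is the Schrödinger
semigroup kernel, which satisfies `0 ≤ q_β ≤ p_β` and the semigroup property.
With `a(β) = (8πβ)⁻¹ ∬ K_β(x,y) dx dy`, `a'(β) = (8πβ)^{d/2-1} ∫ K_β(x,x) dx`,
`a''(β) = (8πβ)^{d/2-1} ∫ K_β(x,-x) dx`, one has
`max{a'(β), a''(β)} ≤ 2^{d/2} a(β/2)`. -/
theorem stmt_19 (d : ℕ)
    (p q K : ℝ → EuclideanSpace ℝ (Fin d) → EuclideanSpace ℝ (Fin d) → ℝ)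
    (hp : ∀ t, 0 < t → ∀ x y,
      p t x y = (8 * π * t) ^ (-(d : ℝ) / 2) * Real.exp (-‖x - y‖ ^ 2 / (8 * t)))
    (hq_nonneg : ∀ t, 0 < t → ∀ x y, 0 ≤ q t x y)
    (hq_le_p : ∀ t, 0 < t → ∀ x y, q t x y ≤ p t x y)
    (hq_semigroup : ∀ t, 0 < t → ∀ x z, q t x z = ∫ y, q (t / 2) x y * q (t / 2) y z)
    (hK : ∀ t x y, K t x y = p t x y - q t x y)
    (β : ℝ) (hβ : 0 < β)
    (h_int_diag : Integrable (fun x : EuclideanSpace ℝ (Fin d) => K β x x))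
    (h_int_anti : Integrable (fun x : EuclideanSpace ℝ (Fin d) => K β x (-x)))
    (h_int_half : Integrable (fun xy : EuclideanSpace ℝ (Fin d) × EuclideanSpace ℝ (Fin d) =>
      K (β / 2) xy.1 xy.2)) :
    max ((8 * π * β) ^ ((d : ℝ) / 2 - 1) * ∫ x, K β x x)
        ((8 * π * β) ^ ((d : ℝ) / 2 - 1) * ∫ x, K β x (-x)) ≤
      (2 : ℝ) ^ ((d : ℝ) / 2) *
        ((8 * π * (β / 2))⁻¹ * ∫ x, ∫ y, K (β / 2) x y) := by
  have hβ2 : 0 < β / 2 := by positivity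
  have hconst8 : (0:ℝ) < 8 * π * (β / 2) := by positivity
  set M : ℝ := (8 * π * (β / 2)) ^ (-(d:ℝ)/2) with hMdef
  have hp_pos : ∀ s, 0 < s → ∀ x y, 0 ≤ p s x y := by
    intro s hs x y; rw [hp s hs]; positivity
  have hp_le : ∀ x y, p (β/2) x y ≤ M := by
    intro x y
    rw [hp _ hβ2]
    have hexp : Real.exp (-‖x - y‖ ^ 2 / (8 * (β/2))) ≤ 1 := by
      rw [Real.exp_le_one_iff, neg_div]
      exact neg_nonpos.2 (by positivity)
    calc (8 * π * (β/2)) ^ (-(d:ℝ)/2) * Real.exp (-‖x - y‖ ^ 2 / (8 * (β/2)))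
        ≤ (8 * π * (β/2)) ^ (-(d:ℝ)/2) * 1 :=
          mul_le_mul_of_nonneg_left hexp (Real.rpow_pos_of_pos hconst8 _).le
      _ = M := by rw [mul_one]
  have hK_nonneg : ∀ s, 0 < s → ∀ x y, 0 ≤ K s x y := by
    intro s hs x y; rw [hK]; exact sub_nonneg.2 (hq_le_p s hs x y)
  -- product-measure version of the half-time integrability
  rw [show (volume : Measure (EuclideanSpace ℝ (Fin d) × EuclideanSpace ℝ (Fin d)))
      = (volume : Measure (EuclideanSpace ℝ (Fin d))).prod volume from Measure.volume_eq_prod _ _]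
    at h_int_half
  have hslice1 : ∀ᵐ x : EuclideanSpace ℝ (Fin d),
      Integrable (fun y => K (β/2) x y) := h_int_half.prod_right_ae
  have hslice2 : ∀ᵐ x : EuclideanSpace ℝ (Fin d),
      Integrable (fun y => K (β/2) y x) := h_int_half.prod_left_ae
  -- the key pointwise estimate
  have main : ∀ x z : EuclideanSpace ℝ (Fin d),
      Integrable (fun y => K (β/2) x y) → Integrable (fun y => K (β/2) y z) →
      K β x z ≤ M * (∫ y, K (β/2) x y) + M * (∫ y, K (β/2) y z) := by
    intro x z hx hz
    have hpc1 : Continuous (fun y : EuclideanSpace ℝ (Fin d) => p (β/2) x y) := by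
      have : (fun y : EuclideanSpace ℝ (Fin d) => p (β/2) x y) =
          fun y => (8 * π * (β/2)) ^ (-(d : ℝ) / 2) *
            Real.exp (-‖x - y‖ ^ 2 / (8 * (β/2))) := by
        funext y; exact hp _ hβ2 x y
      rw [this]; fun_prop
    have hpc2 : Continuous (fun y : EuclideanSpace ℝ (Fin d) => p (β/2) y z) := by
      have : (fun y : EuclideanSpace ℝ (Fin d) => p (β/2) y z) =
          fun y => (8 * π * (β/2)) ^ (-(d : ℝ) / 2) *
            Real.exp (-‖y - z‖ ^ 2 / (8 * (β/2))) := by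
        funext y; exact hp _ hβ2 y z
      rw [this]; fun_prop
    have hq1 : AEStronglyMeasurable (fun y => q (β/2) x y) volume := by
      have : (fun y => q (β/2) x y) = fun y => p (β/2) x y - K (β/2) x y := by
        funext y; rw [hK]; ring
      rw [this]
      exact hpc1.aestronglyMeasurable.sub hx.aestronglyMeasurable
    have hq2 : AEStronglyMeasurable (fun y => q (β/2) y z) volume := by
      have : (fun y => q (β/2) y z) = fun y => p (β/2) y z - K (β/2) y z := by
        funext y; rw [hK]; ring
      rw [this]
      exact hpc2.aestronglyMeasurable.sub hz.aestronglyMeasurable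
    have hpp_int : Integrable (fun y => p (β/2) x y * p (β/2) y z) := by
      have hb : (0:ℝ) < 1 / (4 * (β/2)) := by positivity
      have : (fun y : EuclideanSpace ℝ (Fin d) => p (β/2) x y * p (β/2) y z) = fun y =>
          ((8*π*(β/2)) ^ (-(d:ℝ)/2) * (8*π*(β/2)) ^ (-(d:ℝ)/2) *
            Real.exp (-‖x-z‖^2/(8*(2*(β/2))))) *
          Real.exp (-(1/(4*(β/2))) * ‖y - (2:ℝ)⁻¹ • (x+z)‖^2) := by
        funext y
        rw [hp _ hβ2, hp _ hβ2]
        exact heat_factor d hβ2 x z y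
      rw [this]
      exact ((gauss_integrable d hb).comp_sub_right ((2:ℝ)⁻¹ • (x+z))).const_mul _
    have hqq_int : Integrable (fun y => q (β/2) x y * q (β/2) y z) := by
      refine hpp_int.mono (hq1.mul hq2) ?_
      filter_upwards with y
      rw [Real.norm_eq_abs, Real.norm_eq_abs,
        abs_of_nonneg (mul_nonneg (hq_nonneg _ hβ2 _ _) (hq_nonneg _ hβ2 _ _)),
        abs_of_nonneg (mul_nonneg (hp_pos _ hβ2 _ _) (hp_pos _ hβ2 _ _))]
      exact mul_le_mul (hq_le_p _ hβ2 _ _) (hq_le_p _ hβ2 _ _)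
        (hq_nonneg _ hβ2 _ _) (hp_pos _ hβ2 _ _)
    have hpsemi : p β x z = ∫ y, p (β/2) x y * p (β/2) y z := by
      rw [hp β hβ]
      have hc := heat_conv d hβ2 x z
      rw [show (2*(β/2)) = β by ring] at hc
      rw [← hc]
      congr 1
      funext y
      rw [hp _ hβ2, hp _ hβ2]
    have hKsplit : K β x z = ∫ y,
        (p (β/2) x y * p (β/2) y z - q (β/2) x y * q (β/2) y z) := by
      rw [hK, hpsemi, hq_semigroup β hβ, ← integral_sub hpp_int hqq_int]
    rw [hKsplit]
    have hrhs_int : Integrable (fun y => M * K (β/2) x y + M * K (β/2) y z) :=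
      (hx.const_mul M).add (hz.const_mul M)
    calc (∫ y, (p (β/2) x y * p (β/2) y z - q (β/2) x y * q (β/2) y z))
        ≤ ∫ y, (M * K (β/2) x y + M * K (β/2) y z) := by
          have hsub : Integrable (fun y => p (β/2) x y * p (β/2) y z
              - q (β/2) x y * q (β/2) y z) := hpp_int.sub hqq_int
          apply integral_mono hsub hrhs_int
          intro y
          dsimp only
          have h1 := hq_le_p (β/2) hβ2 x y
          have h2 := hq_le_p (β/2) hβ2 y z
          have h3 := hq_nonneg (β/2) hβ2 x y
          have h4 := hq_nonneg (β/2) hβ2 y z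
          have h5 := hp_le x y
          have h6 := hp_le y z
          simp only [hK]
          have A : 0 ≤ (M - p (β/2) x y) * (p (β/2) y z - q (β/2) y z) :=
            mul_nonneg (by linarith) (by linarith)
          have B : 0 ≤ (M - q (β/2) y z) * (p (β/2) x y - q (β/2) x y) :=
            mul_nonneg (by linarith) (by linarith)
          nlinarith [A, B]
      _ = M * (∫ y, K (β/2) x y) + M * (∫ y, K (β/2) y z) := by
          rw [integral_add (hx.const_mul M) (hz.const_mul M),
            integral_const_mul, integral_const_mul]
  have hInt1 : Integrable (fun x : EuclideanSpace ℝ (Fin d) => ∫ y, K (β/2) x y) :=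
    h_int_half.integral_prod_left
  have hInt2 : Integrable (fun x : EuclideanSpace ℝ (Fin d) => ∫ y, K (β/2) y x) :=
    h_int_half.swap.integral_prod_left
  have hswap : (∫ x : EuclideanSpace ℝ (Fin d), ∫ y, K (β/2) y x)
      = ∫ x, ∫ y, K (β/2) x y := by
    exact integral_integral_swap (f := fun x y => K (β/2) y x) h_int_half.swap
  -- diagonal bound
  have hdiag : (∫ x, K β x x) ≤ 2 * M * ∫ x, ∫ y, K (β/2) x y := by
    have hae : ∀ᵐ x : EuclideanSpace ℝ (Fin d),
        K β x x ≤ M * (∫ y, K (β/2) x y) + M * (∫ y, K (β/2) y x) := by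
      filter_upwards [hslice1, hslice2] with x h1 h2 using main x x h1 h2
    have hg : Integrable (fun x : EuclideanSpace ℝ (Fin d) =>
        M * (∫ y, K (β/2) x y) + M * ∫ y, K (β/2) y x) :=
      (hInt1.const_mul M).add (hInt2.const_mul M)
    have h := integral_mono_ae h_int_diag hg hae
    rw [integral_add (hInt1.const_mul M) (hInt2.const_mul M),
      integral_const_mul, integral_const_mul, hswap] at h
    linarith
  -- antidiagonal bound
  have hanti : (∫ x, K β x (-x)) ≤ 2 * M * ∫ x, ∫ y, K (β/2) x y := by
    have hslice2' : ∀ᵐ x : EuclideanSpace ℝ (Fin d),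
        Integrable (fun y => K (β/2) y (-x)) :=
      (Measure.measurePreserving_neg
        (volume : Measure (EuclideanSpace ℝ (Fin d)))).quasiMeasurePreserving.tendsto_ae.eventually
        hslice2
    have hae : ∀ᵐ x : EuclideanSpace ℝ (Fin d),
        K β x (-x) ≤ M * (∫ y, K (β/2) x y) + M * (∫ y, K (β/2) y (-x)) := by
      filter_upwards [hslice1, hslice2'] with x h1 h2 using main x (-x) h1 h2
    have hInt2' : Integrable (fun x : EuclideanSpace ℝ (Fin d) => ∫ y, K (β/2) y (-x)) :=
      hInt2.comp_neg
    have hg : Integrable (fun x : EuclideanSpace ℝ (Fin d) =>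
        M * (∫ y, K (β/2) x y) + M * ∫ y, K (β/2) y (-x)) :=
      (hInt1.const_mul M).add (hInt2'.const_mul M)
    have h := integral_mono_ae h_int_anti hg hae
    rw [integral_add (hInt1.const_mul M) (hInt2'.const_mul M),
      integral_const_mul, integral_const_mul] at h
    rw [integral_neg_eq_self (fun x : EuclideanSpace ℝ (Fin d) => ∫ y, K (β/2) y x) volume,
      hswap] at h
    linarith
  -- final arithmetic
  have hc1 : (0:ℝ) < (8 * π * β) ^ ((d:ℝ)/2 - 1) :=
    Real.rpow_pos_of_pos (by positivity) _
  have hcc : (8 * π * β) ^ ((d:ℝ)/2 - 1) * (2 * M)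
      = (2:ℝ) ^ ((d:ℝ)/2) * (8 * π * (β/2))⁻¹ := by
    have hl : Real.log (8*π*β) = Real.log 2 + Real.log (8*π*(β/2)) := by
      rw [← Real.log_mul (by norm_num) (ne_of_gt hconst8)]
      congr 1
      ring
    have e1 : (8*π*β) ^ ((d:ℝ)/2 - 1) = Real.exp (Real.log (8*π*β) * ((d:ℝ)/2 - 1)) :=
      Real.rpow_def_of_pos (by positivity) _
    have e2 : M = Real.exp (Real.log (8*π*(β/2)) * (-(d:ℝ)/2)) :=
      Real.rpow_def_of_pos hconst8 _
    have e3 : (2:ℝ) ^ ((d:ℝ)/2) = Real.exp (Real.log 2 * ((d:ℝ)/2)) :=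
      Real.rpow_def_of_pos two_pos _
    have e4 : ((8*π*(β/2)):ℝ)⁻¹ = Real.exp (-Real.log (8*π*(β/2))) := by
      rw [Real.exp_neg, Real.exp_log hconst8]
    have e5 : (2:ℝ) = Real.exp (Real.log 2) := (Real.exp_log two_pos).symm
    rw [e1, e2, e3, e4]
    rw [show (2:ℝ) * Real.exp (Real.log (8*π*(β/2)) * (-(d:ℝ)/2))
        = Real.exp (Real.log 2 + Real.log (8*π*(β/2)) * (-(d:ℝ)/2)) from by
      rw [Real.exp_add, Real.exp_log two_pos]]
    rw [← Real.exp_add, ← Real.exp_add]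
    congr 1
    linear_combination ((d:ℝ)/2 - 1) * hl
  apply max_le
  · calc (8 * π * β) ^ ((d:ℝ)/2 - 1) * ∫ x, K β x x
        ≤ (8 * π * β) ^ ((d:ℝ)/2 - 1) * (2 * M * ∫ x, ∫ y, K (β/2) x y) :=
          mul_le_mul_of_nonneg_left hdiag hc1.le
      _ = (2:ℝ) ^ ((d:ℝ)/2) * ((8 * π * (β/2))⁻¹ * ∫ x, ∫ y, K (β/2) x y) := by
          linear_combination (∫ x, ∫ y, K (β/2) x y) * hcc
  · calc (8 * π * β) ^ ((d:ℝ)/2 - 1) * ∫ x, K β x (-x)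
        ≤ (8 * π * β) ^ ((d:ℝ)/2 - 1) * (2 * M * ∫ x, ∫ y, K (β/2) x y) :=
          mul_le_mul_of_nonneg_left hanti hc1.le
      _ = (2:ℝ) ^ ((d:ℝ)/2) * ((8 * π * (β/2))⁻¹ * ∫ x, ∫ y, K (β/2) x y) := by
          linear_combination (∫ x, ∫ y, K (β/2) x y) * hcc
end
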